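/- Let M and N be positive integers, let g : ℝ^{2M} → ℝ be Lebesgue integrable, and let ξ₁, …, ξ_N ∈ ℝ^{2M}. Let ω denote the standard symplectic bilinear form on ℝ^{2M}, ω(x, y) = Σ_{m=1}^{M} (x_m y_{M+m} − x_{M+m} y_m). Define the N×N complex matrix C by C_{n,n'} := (1/N) ∫_{ℝ^{2M}} exp(i · ω(ξ_n − ξ_{n'}, x)) · g(x) dx. Then C is Hermitian, and the sum of the absolute values of the eigenvalues of C is at most ∫_{ℝ^{2M}} |g(x)| dx. -/

import Mathlib

open MeasureTheory

/-- **Extended Bochner bound, phase-space form (paper's Proposition 3).**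
For an integrable `g : ℝ^{2M} → ℝ` (phase space of `M` modes, points written as pairs
`x = (q, p)` with `q, p : Fin M → ℝ`), phase-space points `ξ₁, …, ξ_N`, and the
standard symplectic form `ω (x, y) = ∑ m (x_m y_{M+m} − x_{M+m} y_m)`, the matrix
`C_{n,n'} = (1/N) ∫ exp(i ω(ξ_n − ξ_{n'}, x)) g(x) dx` is Hermitian and the sum of the
absolute values of its eigenvalues is at most `∫ |g|`. -/
theorem stmt1 {M N : ℕ} (hM : 0 < M) (hN : 0 < N)
    (g : (Fin M → ℝ) × (Fin M → ℝ) → ℝ) (hg : Integrable g)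
    (ξ : Fin N → (Fin M → ℝ) × (Fin M → ℝ))
    (ω : ((Fin M → ℝ) × (Fin M → ℝ)) → ((Fin M → ℝ) × (Fin M → ℝ)) → ℝ)
    (hω : ∀ x y, ω x y = ∑ m, (x.1 m * y.2 m - x.2 m * y.1 m))
    (C : Matrix (Fin N) (Fin N) ℂ)
    (hC : ∀ n n', C n n' = (1 / (N : ℂ)) *
      ∫ x, Complex.exp (Complex.I * (ω (ξ n - ξ n') x : ℂ)) * (g x : ℂ)) :
    C.IsHermitian ∧
      ∀ hH : C.IsHermitian, ∑ i, |hH.eigenvalues i| ≤ ∫ x, |g x| := by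
  classical
  have hXdef : ((Fin M → ℝ) × (Fin M → ℝ)) = ((Fin M → ℝ) × (Fin M → ℝ)) := rfl
  -- bilinearity in the first argument over subtraction
  have hωsub : ∀ a b x : (Fin M → ℝ) × (Fin M → ℝ), ω (a - b) x = ω a x - ω b x := by
    intro a b x
    simp only [hω, ← Finset.sum_sub_distrib]
    refine Finset.sum_congr rfl fun m _ => ?_
    simp only [Prod.fst_sub, Prod.snd_sub, Pi.sub_apply]
    ring
  -- continuity of ω a
  have hcont : ∀ a : (Fin M → ℝ) × (Fin M → ℝ), Continuous (fun x => ω a x) := by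
    intro a
    simp only [hω]
    exact continuous_finset_sum _ fun m _ => by fun_prop
  -- integrability of the modulated integrand
  have hint : ∀ a : (Fin M → ℝ) × (Fin M → ℝ), Integrable (fun x =>
      Complex.exp (Complex.I * (ω a x : ℂ)) * (g x : ℂ)) := by
    intro a
    refine (hg.abs).mono' ?_ ?_
    · exact ((Complex.continuous_exp.comp (continuous_const.mul
        (Complex.continuous_ofReal.comp (hcont a)))).aestronglyMeasurable.mul
        (Complex.continuous_ofReal.comp_aestronglyMeasurable hg.1))
    · filter_upwards with x
      rw [norm_mul, Complex.norm_exp]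
      simp
  -- Hermitian part
  have herm : C.IsHermitian := by
    ext n' n
    simp only [Matrix.conjTranspose_apply, hC, star_mul', RCLike.star_def, ← integral_conj]
    congr 1
    · simp
    · refine integral_congr_ae (Filter.Eventually.of_forall fun x => ?_)
      simp only [star_mul', Complex.conj_ofReal, ← Complex.exp_conj, map_mul,
        Complex.conj_I, RCLike.star_def]
      rw [hωsub, hωsub]
      push_cast
      ring_nf
  refine ⟨herm, fun hH => ?_⟩
  -- the weight function
  set f : ((Fin M → ℝ) × (Fin M → ℝ)) → Fin N → ℂ := fun x n => Complex.exp (Complex.I * (ω (ξ n) x : ℂ)) with hf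
  set w : (Fin N → ℂ) → ((Fin M → ℝ) × (Fin M → ℝ)) → ℂ :=
    fun (v : Fin N → ℂ) x => ∑ n, (starRingEnd ℂ) (v n) * f x n with hw
  have hwcont : ∀ v, Continuous (w v) := by
    intro v
    refine continuous_finset_sum _ fun n _ => continuous_const.mul ?_
    exact Complex.continuous_exp.comp (continuous_const.mul
      (Complex.continuous_ofReal.comp (hcont (ξ n))))
  -- integrability of ‖w v x‖^2 * g x and of ‖w v x‖^2 * |g x|
  have hintw : ∀ v : Fin N → ℂ, Integrable (fun x => ‖w v x‖ ^ 2 * g x) := by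
    intro v
    refine (hg.abs.const_mul ((∑ n, ‖v n‖) ^ 2)).mono' ?_ ?_
    · exact (((hwcont v).norm.pow 2).aestronglyMeasurable.mul hg.1)
    · filter_upwards with x
      rw [norm_mul]
      have hb : ‖w v x‖ ≤ ∑ n, ‖v n‖ := by
        refine (norm_sum_le _ _).trans ?_
        refine Finset.sum_le_sum fun n _ => ?_
        rw [norm_mul, RCLike.norm_conj, hf]
        simp [Complex.norm_exp]
      have h0 : (0:ℝ) ≤ ∑ n, ‖v n‖ := Finset.sum_nonneg fun n _ => norm_nonneg _
      have : ‖(‖w v x‖ ^ 2 : ℝ)‖ ≤ (∑ n, ‖v n‖) ^ 2 := by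
        rw [Real.norm_eq_abs, abs_of_nonneg (by positivity)]
        exact pow_le_pow_left₀ (norm_nonneg _) hb 2
      calc ‖(‖w v x‖ ^ 2 : ℝ)‖ * ‖g x‖ ≤ (∑ n, ‖v n‖) ^ 2 * ‖g x‖ :=
            mul_le_mul_of_nonneg_right this (norm_nonneg _)
        _ = (∑ n, ‖v n‖) ^ 2 * |g x| := by rw [Real.norm_eq_abs]
  -- the key quadratic form identity
  have key : ∀ v : Fin N → ℂ,
      dotProduct (star v) (C.mulVec v)
        = (1 / (N:ℂ)) * ((∫ x, ‖w v x‖ ^ 2 * g x : ℝ) : ℂ) := by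
    intro v
    have step1 : dotProduct (star v) (C.mulVec v)
        = ∑ n, ∑ n', (1 / (N:ℂ)) * ∫ x, ((starRingEnd ℂ) (v n) * v n') *
            (Complex.exp (Complex.I * (ω (ξ n - ξ n') x : ℂ)) * (g x : ℂ)) := by
      simp only [dotProduct, Matrix.mulVec, Pi.star_apply, Finset.mul_sum]
      refine Finset.sum_congr rfl fun n _ => Finset.sum_congr rfl fun n' _ => ?_
      simp only [RCLike.star_def]
      rw [hC, integral_const_mul]
      ring
    rw [step1]
    have hswap : ∑ n, ∑ n', (1 / (N:ℂ)) * ∫ x, ((starRingEnd ℂ) (v n) * v n') *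
            (Complex.exp (Complex.I * (ω (ξ n - ξ n') x : ℂ)) * (g x : ℂ))
        = (1 / (N:ℂ)) * ∫ x, ∑ n, ∑ n', ((starRingEnd ℂ) (v n) * v n') *
            (Complex.exp (Complex.I * (ω (ξ n - ξ n') x : ℂ)) * (g x : ℂ)) := by
      simp only [← Finset.mul_sum]
      congr 1
      rw [integral_finset_sum]
      · refine Finset.sum_congr rfl fun n _ => ?_
        rw [integral_finset_sum]
        intro n' _
        exact (hint (ξ n - ξ n')).const_mul _
      · intro n _
        exact integrable_finset_sum _ fun n' _ => (hint (ξ n - ξ n')).const_mul _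
    rw [hswap]
    congr 1
    refine Eq.trans (integral_congr_ae (Filter.Eventually.of_forall fun x => ?_))
      (integral_ofReal (𝕜 := ℂ))
    dsimp only
    -- pointwise identity
    have hconjf : ∀ n, (starRingEnd ℂ) (f x n) = (f x n)⁻¹ := by
      intro n
      rw [hf]
      simp only [← Complex.exp_conj, ← Complex.exp_neg, map_mul, Complex.conj_I,
        Complex.conj_ofReal]
      ring_nf
    have hfsplit : ∀ n n' : Fin N,
        Complex.exp (Complex.I * (ω (ξ n - ξ n') x : ℂ)) = f x n * (f x n')⁻¹ := by
      intro n n'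
      rw [hωsub, hf]
      simp only [← Complex.exp_neg, ← Complex.exp_add]
      congr 1
      push_cast
      ring
    calc (∑ n, ∑ n', ((starRingEnd ℂ) (v n) * v n') *
            (Complex.exp (Complex.I * (ω (ξ n - ξ n') x : ℂ)) * (g x : ℂ)))
        = (∑ n, (starRingEnd ℂ) (v n) * f x n) *
            (∑ n', v n' * (f x n')⁻¹) * (g x : ℂ) := by
          rw [Finset.sum_mul_sum, Finset.sum_mul]
          refine Finset.sum_congr rfl fun n _ => ?_
          rw [Finset.sum_mul]
          refine Finset.sum_congr rfl fun n' _ => ?_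
          rw [hfsplit]
          ring
      _ = ((‖w v x‖ ^ 2 * g x : ℝ) : ℂ) := by
          have hc : (∑ n', v n' * (f x n')⁻¹) = (starRingEnd ℂ) (w v x) := by
            rw [hw]
            simp only [map_sum, map_mul, RingHomCompTriple.comp_apply, RingHom.id_apply,
              Complex.conj_conj, hconjf]
          rw [hc]
          show w v x * (starRingEnd ℂ) (w v x) * (g x : ℂ) = ((‖w v x‖ ^ 2 * g x : ℝ) : ℂ)
          rw [Complex.mul_conj]
          simp [Complex.normSq_eq_norm_sq, Complex.ofReal_mul,
            Complex.ofReal_pow, mul_comm]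
  -- eigenvalue formula
  have heig : ∀ i, hH.eigenvalues i = (1 / (N:ℝ)) * ∫ x, ‖w (hH.eigenvectorBasis i) x‖ ^ 2 * g x := by
    intro i
    rw [Matrix.IsHermitian.eigenvalues_eq, key]
    simp [Complex.ofReal_mul]
  -- Parseval: ∑ i ‖w (b i) x‖^2 = N
  have hpars : ∀ x, ∑ i, ‖w (hH.eigenvectorBasis i) x‖ ^ 2 = (N : ℝ) := by
    intro x
    have h1 : ∀ i, w (hH.eigenvectorBasis i) x
        = hH.eigenvectorBasis.repr ((WithLp.toLp 2 (f x) : EuclideanSpace ℂ (Fin N))) i := by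
      intro i
      rw [hH.eigenvectorBasis.repr_apply_apply]
      rw [hw]
      simp [EuclideanSpace.inner_eq_star_dotProduct, dotProduct, mul_comm]
    simp only [h1]
    have h2 : ∑ i, ‖hH.eigenvectorBasis.repr ((WithLp.toLp 2 (f x) : EuclideanSpace ℂ (Fin N))) i‖ ^ 2
        = ∑ n, ‖(WithLp.toLp 2 (f x) : EuclideanSpace ℂ (Fin N)) n‖ ^ 2 := by
      rw [← PiLp.norm_sq_eq_of_L2, ← PiLp.norm_sq_eq_of_L2,
        (hH.eigenvectorBasis.repr).norm_map]
    rw [h2]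
    have h3 : ∀ n : Fin N, ‖(WithLp.toLp 2 (f x) : EuclideanSpace ℂ (Fin N)) n‖ ^ 2 = 1 := by
      intro n
      show ‖f x n‖ ^ 2 = 1
      simp [hf, Complex.norm_exp]
    rw [Finset.sum_congr rfl (fun n _ => h3 n)]
    simp
  -- final estimate
  calc ∑ i, |hH.eigenvalues i|
      ≤ ∑ i, (1 / (N:ℝ)) * ∫ x, ‖w (hH.eigenvectorBasis i) x‖ ^ 2 * |g x| := by
        refine Finset.sum_le_sum fun i _ => ?_
        rw [heig i, abs_mul, abs_of_nonneg (by positivity : (0:ℝ) ≤ 1 / (N:ℝ))]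
        refine mul_le_mul_of_nonneg_left ?_ (by positivity)
        calc |∫ x, ‖w (hH.eigenvectorBasis i) x‖ ^ 2 * g x|
            ≤ ∫ x, |‖w (hH.eigenvectorBasis i) x‖ ^ 2 * g x| := by
              exact (Real.norm_eq_abs _ ▸ norm_integral_le_integral_norm _)
          _ = ∫ x, ‖w (hH.eigenvectorBasis i) x‖ ^ 2 * |g x| := by
              refine integral_congr_ae (Filter.Eventually.of_forall fun x => ?_)
              dsimp only
              rw [abs_mul, abs_of_nonneg (by positivity)]
    _ = (1 / (N:ℝ)) * ∫ x, ∑ i, ‖w (hH.eigenvectorBasis i) x‖ ^ 2 * |g x| := by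
        rw [← Finset.mul_sum]
        congr 1
        rw [integral_finset_sum]
        intro i _
        refine ((hintw (hH.eigenvectorBasis i)).abs).congr
          (Filter.Eventually.of_forall fun x => ?_)
        dsimp only
        rw [abs_mul, abs_of_nonneg (by positivity)]
    _ = (1 / (N:ℝ)) * ∫ x, (N:ℝ) * |g x| := by
        congr 1
        refine integral_congr_ae (Filter.Eventually.of_forall fun x => ?_)
        dsimp only
        rw [← Finset.sum_mul, hpars]
    _ = ∫ x, |g x| := by
        rw [integral_const_mul, ← mul_assoc]
        field_simp
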